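/- Let T be a triangulated category, let A1, A2, B be objects of T, and let f1 : A1 ⟶ B and f2 : A2 ⟶ B be morphisms. Suppose given distinguished triangles A1 ⟶f1 B ⟶b1 C1 ⟶a1 A1⟦1⟧, A1 ⊞ A2 ⟶(f1,f2) B ⟶ C ⟶ (A1 ⊞ A2)⟦1⟧ (where (f1,f2) : A1 ⊞ A2 ⟶ B is the morphism out of the biproduct with components f1 and f2), and A2 ⟶(f2 ≫ b1) C1 ⟶ C' ⟶ A2⟦1⟧. Then A1⟦1⟧ ⊞ C is isomorphic to A1⟦1⟧ ⊞ C'. -/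

import Mathlib

open CategoryTheory Category Limits Pretriangulated

universe v u

variable (T : Type u) [Category.{v} T] [HasZeroObject T] [HasShift T ℤ]
  [Preadditive T] [∀ n : ℤ, (shiftFunctor T n).Additive] [Pretriangulated T]
  [HasBinaryBiproducts T]

/-- Given morphisms `f1 : A1 ⟶ B`, `f2 : A2 ⟶ B`, a cone `C1` of `f1`, a cone `C` of
`(f1, f2) : A1 ⊞ A2 ⟶ B`, and a cone `C'` of the composite `f2 ≫ b1 : A2 ⟶ C1`,
then `A1⟦1⟧ ⊞ C ≅ A1⟦1⟧ ⊞ C'`. -/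
theorem biprod_cone_desc_reduction [IsTriangulated T]
    (A1 A2 B : T) (f1 : A1 ⟶ B) (f2 : A2 ⟶ B)
    (C1 : T) (b1 : B ⟶ C1) (a1 : C1 ⟶ A1⟦(1 : ℤ)⟧)
    (hT1 : Triangle.mk f1 b1 a1 ∈ distTriang T)
    (C : T) (b : B ⟶ C) (a : C ⟶ (A1 ⊞ A2)⟦(1 : ℤ)⟧)
    (hT : Triangle.mk (biprod.desc f1 f2) b a ∈ distTriang T)
    (C' : T) (v : C1 ⟶ C') (w : C' ⟶ A2⟦(1 : ℤ)⟧)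
    (hT' : Triangle.mk (f2 ≫ b1) v w ∈ distTriang T) :
    Nonempty ((A1⟦(1 : ℤ)⟧ ⊞ C) ≅ (A1⟦(1 : ℤ)⟧ ⊞ C')) := by
  obtain ⟨Z, p, q, hZ⟩ := distinguished_cocone_triangle (biprod.desc f1 f2 ≫ b1)
  -- First octahedron: `desc f1 f2` followed by `b1`
  have H1 := Triangulated.someOctahedron (u₁₂ := biprod.desc f1 f2) (u₂₃ := b1)
    (u₁₃ := biprod.desc f1 f2 ≫ b1) rfl hT (rot_of_distTriang _ hT1) hZ
  have hf1b : f1 ≫ b = 0 := by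
    have h0 := comp_distTriang_mor_zero₁₂ _ hT
    change biprod.desc f1 f2 ≫ b = 0 at h0
    calc f1 ≫ b = biprod.inl ≫ (biprod.desc f1 f2 ≫ b) := by simp
      _ = 0 := by rw [h0, comp_zero]
  have hzero1 : (Triangle.mk H1.m₁ H1.m₃ ((-f1⟦(1:ℤ)⟧') ≫ b⟦(1:ℤ)⟧')).mor₃ = 0 := by
    change (-f1⟦(1:ℤ)⟧') ≫ b⟦(1:ℤ)⟧' = 0
    rw [Preadditive.neg_comp, ← Functor.map_comp, hf1b, Functor.map_zero, neg_zero]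
  obtain ⟨e1, -, -⟩ := exists_iso_binaryBiproduct_of_distTriang _ H1.mem hzero1
  -- Second octahedron: `biprod.snd` followed by `f2 ≫ b1`
  have hcomm : (biprod.snd : A1 ⊞ A2 ⟶ A2) ≫ (f2 ≫ b1) = biprod.desc f1 f2 ≫ b1 := by
    have h0 := comp_distTriang_mor_zero₁₂ _ hT1
    change f1 ≫ b1 = 0 at h0
    ext
    · simp [reassoc_of% h0, h0]
    · simp
  have H2 := Triangulated.someOctahedron (u₁₂ := (biprod.snd : A1 ⊞ A2 ⟶ A2))
    (u₂₃ := f2 ≫ b1) (u₁₃ := biprod.desc f1 f2 ≫ b1) hcomm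
    (rot_of_distTriang _ (binaryBiproductTriangle_distinguished A1 A2)) hT' hZ
  have hzero2 : (Triangle.mk H2.m₁ H2.m₃ (w ≫ (0 : A2 ⟶ A1⟦(1:ℤ)⟧)⟦(1:ℤ)⟧')).mor₃ = 0 := by
    change w ≫ ((0 : A2 ⟶ A1⟦(1:ℤ)⟧)⟦(1:ℤ)⟧') = 0
    rw [Functor.map_zero, comp_zero]
  obtain ⟨e2, -, -⟩ := exists_iso_binaryBiproduct_of_distTriang _ H2.mem hzero2
  exact ⟨(biprod.braiding _ _) ≪≫ e1.symm ≪≫ e2⟩
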